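/- Let $T$ be a finite free $\mathbb{Z}_p$-module with continuous action of a profinite group $G$, let $V = T \otimes \mathbb{Q}_p$, and let $G_1 \supset G_2 \supset \cdots$ be a decreasing sequence of closed subgroups with intersection $G_\infty$. Suppose $H^0(G_\infty, V) = 0$. Then the orders $\#H^1(G_j, T)_{tors}$ of the torsion subgroups of $H^1(G_j, T)$ are bounded as $j \to \infty$. Equivalently: there is no sequence $t_i \in T \setminus pT$ with $\sigma t_i - t_i \in p^{a(i)} T$ for all $\sigma \in G_\infty$ and $a(i) \to \infty$. -/

import Mathlib

open Filter


/-- Bounded denominators: let `T` be a finite free `ℤ_p`-module with an action of a group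
`G∞` (the intersection of the decreasing sequence of Galois groups), and suppose
`H⁰(G∞, V) = 0` for `V = T ⊗ ℚ_p` (equivalently, `T` has no nonzero `G∞`-invariants,
as `T` is torsion free). Then there is no sequence `tᵢ ∈ T \ pT` with
`σ tᵢ - tᵢ ∈ p^{a(i)} T` for all `σ ∈ G∞` and `a(i) → ∞`; equivalently, the torsion
subgroups of `H¹(G_j, T)` have bounded order. -/
theorem stmt15 (p : ℕ) [Fact p.Prime]
    (T : Type*) [AddCommGroup T] [Module ℤ_[p] T]
    [Module.Free ℤ_[p] T] [Module.Finite ℤ_[p] T]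
    (G : Type*) [Group G]
    (ρ : Representation ℤ_[p] G T)
    (hinv : ∀ t : T, (∀ σ : G, ρ σ t = t) → t = 0) :
    ¬ ∃ (t : ℕ → T) (a : ℕ → ℕ),
        (∀ i, ¬ ∃ s : T, t i = (p : ℤ_[p]) • s) ∧
        (∀ (i : ℕ) (σ : G), ∃ s : T, ρ σ (t i) - t i = ((p : ℤ_[p]) ^ a i) • s) ∧
        Filter.Tendsto a Filter.atTop Filter.atTop := by
  classical
  rintro ⟨t, a, hnp, hdvd, ha⟩
  have hp1 : 1 < (p : ℝ) := by exact_mod_cast (Fact.out : p.Prime).one_lt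
  set ι := Module.Free.ChooseBasisIndex ℤ_[p] T
  set b : Module.Basis ι ℤ_[p] T := Module.Free.chooseBasis ℤ_[p] T
  set e : T ≃ₗ[ℤ_[p]] (ι → ℤ_[p]) := b.equivFun
  set u : ℕ → (ι → ℤ_[p]) := fun i => e (t i) with hu
  -- each u i has norm ≥ 1
  have hu1 : ∀ i, (1:ℝ) ≤ ‖u i‖ := by
    intro i
    by_contra h
    push_neg at h
    have hdv : ∀ j : ι, (p:ℤ_[p]) ∣ u i j := fun j =>
      (PadicInt.norm_lt_one_iff_dvd _).mp (lt_of_le_of_lt (norm_le_pi_norm (u i) j) h)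
    choose s hs using hdv
    apply hnp i
    refine ⟨e.symm s, ?_⟩
    have : u i = (p:ℤ_[p]) • s := by
      funext j; simpa [smul_eq_mul] using hs j
    calc t i = e.symm (u i) := (e.symm_apply_apply (t i)).symm
      _ = e.symm ((p:ℤ_[p]) • s) := by rw [this]
      _ = (p:ℤ_[p]) • e.symm s := map_smul _ _ _
  -- extract convergent subsequence
  obtain ⟨x, -, φ, hφ, hlim⟩ :=
    IsCompact.tendsto_subseq isCompact_univ (fun i => Set.mem_univ (u i))
  -- x has norm ≥ 1, hence nonzero
  have hx1 : (1:ℝ) ≤ ‖x‖ := by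
    have hn : Tendsto (fun i => ‖u (φ i)‖) atTop (nhds ‖x‖) :=
      (continuous_norm.tendsto x).comp hlim
    exact le_of_tendsto_of_tendsto' tendsto_const_nhds hn (fun i => hu1 (φ i))
  -- the transported action
  have key : ∀ σ : G, (e.toLinearMap ∘ₗ (ρ σ) ∘ₗ e.symm.toLinearMap) x = x := by
    intro σ
    set A : (ι → ℤ_[p]) →ₗ[ℤ_[p]] (ι → ℤ_[p]) := e.toLinearMap ∘ₗ (ρ σ) ∘ₗ e.symm.toLinearMap
    have hAcont : Continuous A := LinearMap.continuous_on_pi A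
    -- bound on each term
    have hbound : ∀ i, ‖A (u i) - u i‖ ≤ ((p:ℝ)⁻¹) ^ a i := by
      intro i
      obtain ⟨s, hs⟩ := hdvd i σ
      have hAu : A (u i) - u i = e (ρ σ (t i) - t i) := by
        simp [A, u, map_sub]
      rw [hAu, hs, map_smul]
      calc ‖((p:ℤ_[p]) ^ a i) • e s‖ ≤ ‖((p:ℤ_[p]) ^ a i)‖ * ‖e s‖ := norm_smul_le _ _
        _ ≤ ‖((p:ℤ_[p]) ^ a i)‖ * 1 := by
            refine mul_le_mul_of_nonneg_left ?_ (norm_nonneg _)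
            exact (pi_norm_le_iff_of_nonneg zero_le_one).mpr fun j => PadicInt.norm_le_one _
        _ = ((p:ℝ)⁻¹) ^ a i := by
            rw [mul_one, PadicInt.norm_p_pow, zpow_neg, zpow_natCast, inv_pow]
    -- the terms along the subsequence converge to A x - x
    have h1 : Tendsto (fun i => ‖A (u (φ i)) - u (φ i)‖) atTop (nhds ‖A x - x‖) := by
      have : Tendsto (fun i => A (u (φ i)) - u (φ i)) atTop (nhds (A x - x)) :=
        ((hAcont.tendsto x).comp hlim).sub hlim
      exact (continuous_norm.tendsto _).comp this
    -- and to 0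
    have h2 : Tendsto (fun i => ‖A (u (φ i)) - u (φ i)‖) atTop (nhds 0) := by
      have hb : Tendsto (fun i => ((p:ℝ)⁻¹) ^ a (φ i)) atTop (nhds 0) := by
        refine (tendsto_pow_atTop_nhds_zero_of_lt_one (by positivity) ?_).comp
          (ha.comp hφ.tendsto_atTop)
        rw [inv_lt_one_iff₀]; right; exact hp1
      exact squeeze_zero (fun i => norm_nonneg _) (fun i => hbound (φ i)) hb
    have h3 := tendsto_nhds_unique h1 h2
    have h4 : A x - x = 0 := by rwa [norm_eq_zero] at h3
    exact sub_eq_zero.mp h4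
  -- conclude
  have hfix : ∀ σ : G, ρ σ (e.symm x) = e.symm x := by
    intro σ
    apply e.injective
    have := key σ
    simpa using this
  have hzero : e.symm x = 0 := hinv _ hfix
  have hx0 : x = 0 := by
    have := congrArg e hzero
    simpa using this
  rw [hx0, norm_zero] at hx1
  linarith
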